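/- Let n = p_1^{n_1} p_2^{n_2} with p_1, p_2 distinct primes and n_1 ≤ n_2. Then the clique number and chromatic number of the intersection graph of ideals of Z/nZ both equal n_2(n_1 + 1) − 1. -/

import Mathlib

/-- The intersection graph of ideals of a ring: vertices are the proper
non-trivial ideals, two distinct ideals are adjacent iff their intersection
is non-zero. -/
def interGraph (R : Type*) [CommRing R] : SimpleGraph {I : Ideal R // I ≠ ⊥ ∧ I ≠ ⊤} where
  Adj I J := I ≠ J ∧ I.1 ⊓ J.1 ≠ ⊥
  symm := by constructor; rintro I J ⟨h1, h2⟩; exact ⟨h1.symm, by rwa [inf_comm]⟩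
  loopless := by constructor; rintro I ⟨h, -⟩; exact h rfl

/-- Degree of a vertex. -/
noncomputable def vdeg {V : Type*} (G : SimpleGraph V) (v : V) : ℕ :=
  Nat.card {w // G.Adj v w}

/-- Maximum degree. -/
noncomputable def maxDeg {V : Type*} (G : SimpleGraph V) : ℕ := ⨆ v, vdeg G v

/-- Edge chromatic number (chromatic index), as the chromatic number of the line graph. -/
noncomputable def edgeChrom {V : Type*} (G : SimpleGraph V) : ℕ∞ :=
  (SimpleGraph.lineGraph G).chromaticNumber

/-- The intersection graph of non-empty proper subsets of `Fin m`. -/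
def subsetGraph (m : ℕ) : SimpleGraph {S : Finset (Fin m) // S ≠ ∅ ∧ S ≠ Finset.univ} where
  Adj S T := S ≠ T ∧ (S.1 ∩ T.1).Nonempty
  symm := by constructor; rintro S T ⟨h1, h2⟩; exact ⟨h1.symm, by rwa [Finset.inter_comm]⟩
  loopless := by constructor; rintro S ⟨h, -⟩; exact h rfl


open Ideal

section ZModLemmas
variable {n : ℕ}

lemma igDvd [NeZero n] {a : ℕ} (ha : a ∣ n) (m : ℕ) :
    ((a : ZMod n) ∣ (m : ZMod n)) ↔ a ∣ m := by
  constructor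
  · rintro ⟨x, hx⟩
    obtain ⟨y, rfl⟩ := ZMod.natCast_zmod_surjective x
    rw [← Nat.cast_mul, ZMod.natCast_eq_natCast_iff] at hx
    have h2 : (n : ℤ) ∣ ((a * y : ℕ) : ℤ) - (m : ℤ) := hx.dvd
    have han : (a : ℤ) ∣ (n : ℤ) := Int.natCast_dvd_natCast.mpr ha
    have h3 : (a : ℤ) ∣ ((a * y : ℕ) : ℤ) - (m : ℤ) := han.trans h2
    have h4 : (a : ℤ) ∣ ((a * y : ℕ) : ℤ) := by push_cast; exact Dvd.intro _ rfl
    have h5 : (a : ℤ) ∣ (m : ℤ) := by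
      have := dvd_sub h4 h3
      simpa using this
    exact_mod_cast h5
  · rintro ⟨c, rfl⟩; exact ⟨c, by push_cast; rfl⟩

lemma igInf [NeZero n] {a b : ℕ} (ha : a ∣ n) (hb : b ∣ n) :
    span {(a : ZMod n)} ⊓ span {(b : ZMod n)} = span {((Nat.lcm a b : ℕ) : ZMod n)} := by
  ext z
  obtain ⟨m, rfl⟩ := ZMod.natCast_zmod_surjective z
  rw [Submodule.mem_inf]
  simp only [Ideal.mem_span_singleton]
  rw [igDvd ha, igDvd hb, igDvd (Nat.lcm_dvd ha hb), Nat.lcm_dvd_iff]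

lemma igBot [NeZero n] {a : ℕ} (ha : a ∣ n) : span {(a : ZMod n)} = ⊥ ↔ a = n := by
  rw [Ideal.span_singleton_eq_bot, ZMod.natCast_eq_zero_iff]
  exact ⟨fun h => Nat.dvd_antisymm ha h, fun h => h ▸ dvd_rfl⟩

lemma igTop [NeZero n] {a : ℕ} (ha : a ∣ n) : span {(a : ZMod n)} = ⊤ ↔ a = 1 := by
  rw [Ideal.span_singleton_eq_top, ZMod.isUnit_iff_coprime, Nat.Coprime, Nat.gcd_eq_left ha]

lemma igClass [NeZero n] (I : Ideal (ZMod n)) : ∃ d, d ∣ n ∧ I = span {(d : ZMod n)} := by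
  haveI : IsPrincipalIdealRing (ZMod n) :=
    IsPrincipalIdealRing.of_surjective (Int.castRingHom (ZMod n)) ZMod.intCast_surjective
  obtain ⟨x, hx⟩ := (IsPrincipalIdealRing.principal I).principal
  have hx' : I = span {x} := hx
  refine ⟨Nat.gcd x.val n, Nat.gcd_dvd_right _ _, ?_⟩
  rw [hx']
  apply le_antisymm <;> rw [Ideal.span_singleton_le_span_singleton]
  · have h1 : (Nat.gcd x.val n : ZMod n) ∣ (x.val : ZMod n) :=
      Nat.cast_dvd_cast (Nat.gcd_dvd_left _ _)
    rwa [ZMod.natCast_rightInverse x] at h1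
  · have hb := Nat.gcd_eq_gcd_ab x.val n
    have h2 : ((Nat.gcd x.val n : ℤ) : ZMod n) =
        ((x.val * Nat.gcdA x.val n + n * Nat.gcdB x.val n : ℤ) : ZMod n) := by rw [← hb]
    push_cast at h2
    rw [ZMod.natCast_self, ZMod.natCast_rightInverse x] at h2
    refine ⟨(Nat.gcdA x.val n : ZMod n), ?_⟩
    rw [h2]; ring

end ZModLemmas

section NatLemmas
variable {p₁ p₂ : ℕ}

lemma igFact (hp₁ : p₁.Prime) (hp₂ : p₂.Prime) (hne : p₁ ≠ p₂) (a b : ℕ) :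
    (p₁ ^ a * p₂ ^ b).factorization p₁ = a := by
  rw [Nat.factorization_mul (pow_ne_zero _ hp₁.pos.ne') (pow_ne_zero _ hp₂.pos.ne'),
    hp₁.factorization_pow, hp₂.factorization_pow]
  simp [Finsupp.single_apply, hne.symm]

lemma igUniq (hp₁ : p₁.Prime) (hp₂ : p₂.Prime) (hne : p₁ ≠ p₂) {a b c d : ℕ}
    (h : p₁ ^ a * p₂ ^ b = p₁ ^ c * p₂ ^ d) : a = c ∧ b = d := by
  constructor
  · have := congrArg (fun t => t.factorization p₁) h
    simpa [igFact hp₁ hp₂ hne] using this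
  · have := congrArg (fun t => t.factorization p₂) h
    simpa [mul_comm (p₁ ^ _) (p₂ ^ _), igFact hp₂ hp₁ hne.symm] using this

lemma igLcm (hp₁ : p₁.Prime) (hp₂ : p₂.Prime) (hne : p₁ ≠ p₂) (a b c d : ℕ) :
    Nat.lcm (p₁ ^ a * p₂ ^ b) (p₁ ^ c * p₂ ^ d) = p₁ ^ max a c * p₂ ^ max b d := by
  apply Nat.dvd_antisymm
  · exact Nat.lcm_dvd
      (mul_dvd_mul (pow_dvd_pow _ (le_max_left a c)) (pow_dvd_pow _ (le_max_left b d)))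
      (mul_dvd_mul (pow_dvd_pow _ (le_max_right a c)) (pow_dvd_pow _ (le_max_right b d)))
  · have cop : Nat.Coprime (p₁ ^ max a c) (p₂ ^ max b d) :=
      ((Nat.coprime_primes hp₁ hp₂).mpr hne).pow _ _
    refine cop.mul_dvd_of_dvd_of_dvd ?_ ?_
    · rcases le_total a c with h | h
      · exact dvd_trans (dvd_mul_of_dvd_left (pow_dvd_pow _ (max_le h le_rfl)) _)
          (Nat.dvd_lcm_right _ _)
      · exact dvd_trans (dvd_mul_of_dvd_left (pow_dvd_pow _ (max_le le_rfl h)) _)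
          (Nat.dvd_lcm_left _ _)
    · rcases le_total b d with h | h
      · exact dvd_trans (dvd_mul_of_dvd_right (pow_dvd_pow _ (max_le h le_rfl)) _)
          (Nat.dvd_lcm_right _ _)
      · exact dvd_trans (dvd_mul_of_dvd_right (pow_dvd_pow _ (max_le le_rfl h)) _)
          (Nat.dvd_lcm_left _ _)

end NatLemmas

/-- The intersection graph on exponent pairs. -/
def pairGraph (n₁ n₂ : ℕ) :
    SimpleGraph {v : ℕ × ℕ // v.1 ≤ n₁ ∧ v.2 ≤ n₂ ∧ v ≠ (0, 0) ∧ v ≠ (n₁, n₂)} where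
  Adj u v := u ≠ v ∧ ¬(max u.1.1 v.1.1 = n₁ ∧ max u.1.2 v.1.2 = n₂)
  symm := by
    constructor; rintro u v ⟨h1, h2⟩
    exact ⟨h1.symm, by rwa [max_comm v.1.1 u.1.1, max_comm v.1.2 u.1.2]⟩
  loopless := by constructor; rintro u ⟨h, -⟩; exact h rfl

lemma pg_clique_bound {n₁ n₂ : ℕ} (h₁ : 1 ≤ n₁) (h₁₂ : n₁ ≤ n₂) {m : ℕ}
    {s : Finset {v : ℕ × ℕ // v.1 ≤ n₁ ∧ v.2 ≤ n₂ ∧ v ≠ (0, 0) ∧ v ≠ (n₁, n₂)}}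
    (hs : (pairGraph n₁ n₂).IsNClique m s) : m ≤ n₂ * (n₁ + 1) - 1 := by
  have hn₂ : 1 ≤ n₂ := h₁.trans h₁₂
  have hcard : m = (s.image (fun v => v.1)).card := by
    rw [Finset.card_image_of_injective _ Subtype.val_injective, hs.2]
  by_cases hc : ∃ v ∈ s, v.1.2 = n₂
  · obtain ⟨v, hv, hv2⟩ := hc
    have hv1 : v.1.1 ≠ n₁ := fun h => v.2.2.2.2 (Prod.ext h hv2)
    have hall : ∀ w ∈ s, w.1.1 < n₁ := by
      intro w hw
      rcases eq_or_ne w v with rfl | hwv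
      · exact lt_of_le_of_ne w.2.1 hv1
      · have adj := hs.1 hw hv hwv
        by_contra hcon
        have hw1 : w.1.1 = n₁ := le_antisymm w.2.1 (not_lt.mp hcon)
        exact adj.2 ⟨by rw [hw1]; exact max_eq_left v.2.1,
          by rw [hv2]; exact max_eq_right w.2.2.1⟩
    have hsub : s.image (fun v => v.1) ⊆
        (Finset.range n₁ ×ˢ Finset.range (n₂ + 1)).erase (0, 0) := by
      intro x hx
      obtain ⟨w, hw, rfl⟩ := Finset.mem_image.mp hx
      rw [Finset.mem_erase, Finset.mem_product, Finset.mem_range, Finset.mem_range]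
      exact ⟨w.2.2.2.1, hall w hw, Nat.lt_succ_of_le w.2.2.1⟩
    have hle := Finset.card_le_card hsub
    rw [Finset.card_erase_of_mem (by
        rw [Finset.mem_product, Finset.mem_range, Finset.mem_range]
        exact ⟨h₁, Nat.succ_pos _⟩),
      Finset.card_product, Finset.card_range, Finset.card_range] at hle
    have hle2 : n₁ * (n₂ + 1) ≤ n₂ * (n₁ + 1) := by nlinarith
    rw [hcard]
    exact le_trans hle (Nat.sub_le_sub_right hle2 1)
  · push_neg at hc
    have hsub : s.image (fun v => v.1) ⊆
        (Finset.range (n₁ + 1) ×ˢ Finset.range n₂).erase (0, 0) := by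
      intro x hx
      obtain ⟨w, hw, rfl⟩ := Finset.mem_image.mp hx
      rw [Finset.mem_erase, Finset.mem_product, Finset.mem_range, Finset.mem_range]
      exact ⟨w.2.2.2.1, Nat.lt_succ_of_le w.2.1, lt_of_le_of_ne w.2.2.1 (hc w hw)⟩
    have hle := Finset.card_le_card hsub
    rw [Finset.card_erase_of_mem (by
        rw [Finset.mem_product, Finset.mem_range, Finset.mem_range]
        exact ⟨Nat.succ_pos _, hn₂⟩),
      Finset.card_product, Finset.card_range, Finset.card_range, Nat.mul_comm] at hle
    rw [hcard]
    exact hle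

lemma pg_big_clique {n₁ n₂ : ℕ} (h₁ : 1 ≤ n₁) (h₁₂ : n₁ ≤ n₂) :
    ∃ s, (pairGraph n₁ n₂).IsNClique (n₂ * (n₁ + 1) - 1) s := by
  have hn₂ : 1 ≤ n₂ := h₁.trans h₁₂
  set A : Finset (ℕ × ℕ) := (Finset.range (n₁ + 1) ×ˢ Finset.range n₂).erase (0, 0) with hA
  have hmemA : ∀ v ∈ A, v.1 ≤ n₁ ∧ v.2 < n₂ ∧ v ≠ (0, 0) := by
    intro v hv
    rw [hA, Finset.mem_erase, Finset.mem_product, Finset.mem_range, Finset.mem_range] at hv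
    exact ⟨Nat.lt_succ_iff.mp hv.2.1, hv.2.2, hv.1⟩
  refine ⟨A.subtype _, ?_, ?_⟩
  · intro u hu v hv huv
    rw [Finset.mem_coe, Finset.mem_subtype] at hu hv
    refine ⟨huv, ?_⟩
    rintro ⟨-, h2⟩
    have h3 := (hmemA _ hu).2.1
    have h4 := (hmemA _ hv).2.1
    omega
  · rw [Finset.card_subtype, Finset.filter_true_of_mem, hA,
      Finset.card_erase_of_mem (by
        rw [Finset.mem_product, Finset.mem_range, Finset.mem_range]
        exact ⟨Nat.succ_pos _, hn₂⟩),
      Finset.card_product, Finset.card_range, Finset.card_range, Nat.mul_comm]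
    intro v hv
    obtain ⟨hv1, hv2, hv3⟩ := hmemA v hv
    exact ⟨hv1, le_of_lt hv2, hv3, fun h => by rw [h] at hv2; exact lt_irrefl _ (lt_of_le_of_lt h₁₂ (by simpa using hv2))⟩

lemma pg_colorable {n₁ n₂ : ℕ} (h₁ : 1 ≤ n₁) (h₁₂ : n₁ ≤ n₂) :
    (pairGraph n₁ n₂).Colorable (n₂ * (n₁ + 1) - 1) := by
  have hn₂ : 1 ≤ n₂ := h₁.trans h₁₂
  have code_inj : ∀ a b c d : ℕ, b < n₂ → d < n₂ → (a, b) ≠ ((0 : ℕ), (0 : ℕ)) →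
      (c, d) ≠ ((0 : ℕ), (0 : ℕ)) → a * n₂ + b - 1 = c * n₂ + d - 1 → a = c ∧ b = d := by
    intro a b c d hb hd h0 h0' h
    have e1 : 1 ≤ a * n₂ + b := by
      rcases Nat.eq_zero_or_pos a with rfl | ha
      · have hb0 : b ≠ 0 := fun hb0 => h0 (by rw [hb0])
        omega
      · have := Nat.le_mul_of_pos_left n₂ ha
        omega
    have e2 : 1 ≤ c * n₂ + d := by
      rcases Nat.eq_zero_or_pos c with rfl | hcpos
      · have hd0 : d ≠ 0 := fun hd0 => h0' (by rw [hd0])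
        omega
      · have := Nat.le_mul_of_pos_left n₂ hcpos
        omega
    have h' : a * n₂ + b = c * n₂ + d := by omega
    have hdiv : ∀ x y : ℕ, y < n₂ → (x * n₂ + y) / n₂ = x := by
      intro x y hy
      rw [Nat.add_comm, Nat.add_mul_div_right _ _ (by omega : 0 < n₂), Nat.div_eq_of_lt hy,
        Nat.zero_add]
    have hac : a = c := by
      have t1 := hdiv a b hb
      rw [h', hdiv c d hd] at t1
      exact t1.symm
    subst hac
    exact ⟨rfl, Nat.add_left_cancel h'⟩
  rw [SimpleGraph.colorable_iff_exists_bdd_nat_coloring]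
  refine ⟨SimpleGraph.Coloring.mk
    (fun v => if v.1.2 = n₂ then n₁ * n₂ + v.1.1 - 1 else v.1.1 * n₂ + v.1.2 - 1) ?_, ?_⟩
  · intro u v hadj heq
    obtain ⟨hne', hmax⟩ := hadj
    have hu0 : (u.1.1, u.1.2) ≠ ((0 : ℕ), (0 : ℕ)) := by
      rw [Prod.mk.eta]; exact u.2.2.2.1
    have hv0 : (v.1.1, v.1.2) ≠ ((0 : ℕ), (0 : ℕ)) := by
      rw [Prod.mk.eta]; exact v.2.2.2.1
    have hn₁0 : ∀ x : ℕ, (n₁, x) ≠ ((0 : ℕ), (0 : ℕ)) := by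
      intro x h; injection h with h1 h2; omega
    by_cases hu2 : u.1.2 = n₂ <;> by_cases hv2 : v.1.2 = n₂ <;>
      simp only [hu2, hv2, if_pos, if_neg, if_true, if_false, reduceIte] at heq
    · -- both second coords = n₂
      have hu1 : u.1.1 < n₁ := lt_of_le_of_ne u.2.1 (fun h => u.2.2.2.2 (Prod.ext h hu2))
      have hv1 : v.1.1 < n₁ := lt_of_le_of_ne v.2.1 (fun h => v.2.2.2.2 (Prod.ext h hv2))
      obtain ⟨-, h2⟩ := code_inj n₁ u.1.1 n₁ v.1.1 (lt_of_lt_of_le hu1 h₁₂)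
        (lt_of_lt_of_le hv1 h₁₂) (hn₁0 _) (hn₁0 _) heq
      exact hne' (Subtype.ext (Prod.ext h2 (hu2.trans hv2.symm)))
    · -- u.2 = n₂, v.2 ≠ n₂
      have hu1 : u.1.1 < n₁ := lt_of_le_of_ne u.2.1 (fun h => u.2.2.2.2 (Prod.ext h hu2))
      obtain ⟨h1, h2⟩ := code_inj n₁ u.1.1 v.1.1 v.1.2 (lt_of_lt_of_le hu1 h₁₂)
        (lt_of_le_of_ne v.2.2.1 hv2) (hn₁0 _) hv0 heq
      exact hmax ⟨by rw [← h1]; exact max_eq_right u.2.1, by rw [hu2]; exact max_eq_left v.2.2.1⟩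
    · -- u.2 ≠ n₂, v.2 = n₂
      have hv1 : v.1.1 < n₁ := lt_of_le_of_ne v.2.1 (fun h => v.2.2.2.2 (Prod.ext h hv2))
      obtain ⟨h1, h2⟩ := code_inj u.1.1 u.1.2 n₁ v.1.1 (lt_of_le_of_ne u.2.2.1 hu2)
        (lt_of_lt_of_le hv1 h₁₂) hu0 (hn₁0 _) heq
      exact hmax ⟨by rw [h1]; exact max_eq_left v.2.1, by rw [hv2]; exact max_eq_right u.2.2.1⟩
    · obtain ⟨h1, h2⟩ := code_inj u.1.1 u.1.2 v.1.1 v.1.2 (lt_of_le_of_ne u.2.2.1 hu2)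
        (lt_of_le_of_ne v.2.2.1 hv2) hu0 hv0 heq
      exact hne' (Subtype.ext (Prod.ext h1 h2))
  · intro v
    show (if v.1.2 = n₂ then n₁ * n₂ + v.1.1 - 1 else v.1.1 * n₂ + v.1.2 - 1) < n₂ * (n₁ + 1) - 1
    have hkey : n₂ * (n₁ + 1) = n₁ * n₂ + n₂ := by ring
    by_cases hv2 : v.1.2 = n₂
    · have hv1 : v.1.1 < n₁ := lt_of_le_of_ne v.2.1 (fun h => v.2.2.2.2 (Prod.ext h hv2))
      have h2 : v.1.1 < n₂ := lt_of_lt_of_le hv1 h₁₂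
      have h1 : 1 ≤ n₁ * n₂ := Nat.one_le_iff_ne_zero.mpr (Nat.mul_ne_zero (by omega) (by omega))
      rw [if_pos hv2, hkey]
      omega
    · have hb : v.1.2 < n₂ := lt_of_le_of_ne v.2.2.1 hv2
      have ha : v.1.1 * n₂ ≤ n₁ * n₂ := Nat.mul_le_mul_right _ v.2.1
      have h1 : 1 ≤ n₁ * n₂ := Nat.one_le_iff_ne_zero.mpr (Nat.mul_ne_zero (by omega) (by omega))
      rw [if_neg hv2, hkey]
      omega


lemma igCliqueEx {V W : Type*} {G : SimpleGraph V} {H : SimpleGraph W} (e : G ≃g H) (m : ℕ)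
    (h : ∃ s, G.IsNClique m s) : ∃ t, H.IsNClique m t := by
  classical
  obtain ⟨s, hs, hcard⟩ := h
  refine ⟨s.image e, ?_, by rw [Finset.card_image_of_injective _ e.injective]; exact hcard⟩
  intro x hx y hy hxy
  simp only [Finset.coe_image, Set.mem_image, Finset.mem_coe] at hx hy
  obtain ⟨u, hu, rfl⟩ := hx
  obtain ⟨v, hv, rfl⟩ := hy
  exact e.map_rel_iff.mpr (hs hu hv (fun h => hxy (by rw [h])))

lemma igCliqueNum_eq {V W : Type*} {G : SimpleGraph V} {H : SimpleGraph W} (e : G ≃g H) :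
    G.cliqueNum = H.cliqueNum := by
  unfold SimpleGraph.cliqueNum
  congr 1
  ext m
  exact ⟨igCliqueEx e m, igCliqueEx e.symm m⟩

lemma igChrom_eq {V W : Type*} {G : SimpleGraph V} {H : SimpleGraph W} (e : G ≃g H) :
    G.chromaticNumber = H.chromaticNumber :=
  le_antisymm (SimpleGraph.chromaticNumber_mono_of_hom e.toEmbedding.toHom)
    (SimpleGraph.chromaticNumber_mono_of_hom e.symm.toEmbedding.toHom)

lemma igIsoEx {p₁ p₂ : ℕ} (hp₁ : p₁.Prime) (hp₂ : p₂.Prime) (hne : p₁ ≠ p₂) (n₁ n₂ : ℕ) :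
    Nonempty (pairGraph n₁ n₂ ≃g interGraph (ZMod (p₁ ^ n₁ * p₂ ^ n₂))) := by
  haveI : NeZero (p₁ ^ n₁ * p₂ ^ n₂) :=
    ⟨Nat.mul_ne_zero (pow_ne_zero _ hp₁.pos.ne') (pow_ne_zero _ hp₂.pos.ne')⟩
  have huniq : ∀ {a b c d : ℕ}, p₁ ^ a * p₂ ^ b = p₁ ^ c * p₂ ^ d → a = c ∧ b = d :=
    igUniq hp₁ hp₂ hne
  have hDdvd : ∀ v : {v : ℕ × ℕ // v.1 ≤ n₁ ∧ v.2 ≤ n₂ ∧ v ≠ (0, 0) ∧ v ≠ (n₁, n₂)},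
      (p₁ ^ v.1.1 * p₂ ^ v.1.2) ∣ (p₁ ^ n₁ * p₂ ^ n₂) :=
    fun v => mul_dvd_mul (pow_dvd_pow _ v.2.1) (pow_dvd_pow _ v.2.2.1)
  let f : {v : ℕ × ℕ // v.1 ≤ n₁ ∧ v.2 ≤ n₂ ∧ v ≠ (0, 0) ∧ v ≠ (n₁, n₂)} →
      {I : Ideal (ZMod (p₁ ^ n₁ * p₂ ^ n₂)) // I ≠ ⊥ ∧ I ≠ ⊤} := fun v =>
    ⟨Ideal.span {((p₁ ^ v.1.1 * p₂ ^ v.1.2 : ℕ) : ZMod (p₁ ^ n₁ * p₂ ^ n₂))},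
      by
        intro h
        rw [igBot (hDdvd v)] at h
        exact v.2.2.2.2 (Prod.ext (huniq h).1 (huniq h).2),
      by
        intro h
        rw [igTop (hDdvd v)] at h
        have hab := huniq (show p₁ ^ v.1.1 * p₂ ^ v.1.2 = p₁ ^ 0 * p₂ ^ 0 by simpa using h)
        exact v.2.2.2.1 (Prod.ext hab.1 hab.2)⟩
  have hinj : Function.Injective f := by
    intro u v h
    have hsp := Subtype.ext_iff.mp h
    have h1 : (p₁ ^ v.1.1 * p₂ ^ v.1.2) ∣ (p₁ ^ u.1.1 * p₂ ^ u.1.2) := by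
      have h2 := le_of_eq hsp
      rw [Ideal.span_singleton_le_span_singleton] at h2
      exact (igDvd (hDdvd v) _).mp h2
    have h2 : (p₁ ^ u.1.1 * p₂ ^ u.1.2) ∣ (p₁ ^ v.1.1 * p₂ ^ v.1.2) := by
      have h2 := le_of_eq hsp.symm
      rw [Ideal.span_singleton_le_span_singleton] at h2
      exact (igDvd (hDdvd u) _).mp h2
    obtain ⟨ha, hb⟩ := huniq (Nat.dvd_antisymm h2 h1)
    exact Subtype.ext (Prod.ext ha hb)
  have hsurj : Function.Surjective f := by
    rintro ⟨I, hbot, htop⟩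
    obtain ⟨d, hd, rfl⟩ := igClass I
    obtain ⟨d₁, d₂, hd₁, hd₂, rfl⟩ := exists_dvd_and_dvd_of_dvd_mul hd
    obtain ⟨a, ha, rfl⟩ := (Nat.dvd_prime_pow hp₁).mp hd₁
    obtain ⟨b, hb, rfl⟩ := (Nat.dvd_prime_pow hp₂).mp hd₂
    refine ⟨⟨(a, b), ha, hb, ?_, ?_⟩, ?_⟩
    · intro h
      apply htop
      rw [igTop hd]
      injection h with h1 h2
      rw [h1, h2]; simp
    · intro h
      apply hbot
      rw [igBot hd]
      injection h with h1 h2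
      rw [h1, h2]
    · exact Subtype.ext rfl
  have hmax : ∀ u v : {v : ℕ × ℕ // v.1 ≤ n₁ ∧ v.2 ≤ n₂ ∧ v ≠ (0, 0) ∧ v ≠ (n₁, n₂)},
      ((f u).1 ⊓ (f v).1 = ⊥) ↔ (max u.1.1 v.1.1 = n₁ ∧ max u.1.2 v.1.2 = n₂) := by
    intro u v
    show Ideal.span _ ⊓ Ideal.span _ = ⊥ ↔ _
    rw [igInf (hDdvd u) (hDdvd v), igLcm hp₁ hp₂ hne,
      igBot (mul_dvd_mul (pow_dvd_pow _ (max_le u.2.1 v.2.1))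
        (pow_dvd_pow _ (max_le u.2.2.1 v.2.2.1)))]
    constructor
    · exact fun h => huniq h
    · rintro ⟨h1, h2⟩; rw [h1, h2]
  refine ⟨⟨Equiv.ofBijective f ⟨hinj, hsurj⟩, @fun u v => ?_⟩⟩
  constructor
  · rintro ⟨hne', hbot'⟩
    exact ⟨fun h => hne' (congrArg f h), fun hc => hbot' ((hmax u v).mpr hc)⟩
  · rintro ⟨hne', hc⟩
    exact ⟨fun h => hne' (hinj h), fun h => hc ((hmax u v).mp h)⟩

theorem stmt4 (p₁ p₂ n₁ n₂ : ℕ) (hp₁ : p₁.Prime) (hp₂ : p₂.Prime) (hne : p₁ ≠ p₂)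
    (h₁ : 1 ≤ n₁) (h₁₂ : n₁ ≤ n₂) :
    (interGraph (ZMod (p₁ ^ n₁ * p₂ ^ n₂))).cliqueNum = n₂ * (n₁ + 1) - 1 ∧
    (interGraph (ZMod (p₁ ^ n₁ * p₂ ^ n₂))).chromaticNumber = ((n₂ * (n₁ + 1) - 1 : ℕ) : ℕ∞) := by
  obtain ⟨e⟩ := igIsoEx hp₁ hp₂ hne n₁ n₂
  have hcn : (interGraph (ZMod (p₁ ^ n₁ * p₂ ^ n₂))).cliqueNum = (pairGraph n₁ n₂).cliqueNum :=
    (igCliqueNum_eq e).symm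
  have hch : (interGraph (ZMod (p₁ ^ n₁ * p₂ ^ n₂))).chromaticNumber =
      (pairGraph n₁ n₂).chromaticNumber := (igChrom_eq e).symm
  obtain ⟨s, hs⟩ := pg_big_clique h₁ h₁₂
  constructor
  · rw [hcn]
    refine le_antisymm
      (csSup_le ⟨0, ∅, SimpleGraph.isNClique_empty.mpr rfl⟩ ?_)
      (le_csSup ⟨n₂ * (n₁ + 1) - 1, ?_⟩ ⟨s, hs⟩)
    · rintro m ⟨t, ht⟩
      exact pg_clique_bound h₁ h₁₂ ht
    · rintro m ⟨t, ht⟩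
      exact pg_clique_bound h₁ h₁₂ ht
  · rw [hch]
    refine le_antisymm (pg_colorable h₁ h₁₂).chromaticNumber_le ?_
    have hle := hs.1.card_le_chromaticNumber
    rw [hs.2] at hle
    exact hle
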